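/- For any set Z, the space (Z → Bool) with the product topology (Bool discrete) and the pointwise order is a bi-Esakia space: it is a compact topological space satisfying the Priestley separation axiom, and for every clopen subset U, both the lower closure ↓U = { x : ∃ y ∈ U, x ≤ y } and the upper closure ↑U = { x : ∃ y ∈ U, y ≤ x } are clopen. -/

import Mathlib

section Aux

variable {Z : Type*}

lemma aux_sup_cont : Continuous (fun p : (Z → Bool) × (Z → Bool) => p.1 ⊔ p.2) := by
  refine continuous_pi fun z => ?_
  have h : Continuous (fun q : Bool × Bool => q.1 ⊔ q.2) := continuous_of_discreteTopology
  have h2 : Continuous (fun p : (Z → Bool) × (Z → Bool) => (p.1 z, p.2 z)) :=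
    Continuous.prodMk ((continuous_apply z).comp continuous_fst)
      ((continuous_apply z).comp continuous_snd)
  exact h.comp h2

lemma aux_inf_cont : Continuous (fun p : (Z → Bool) × (Z → Bool) => p.1 ⊓ p.2) := by
  refine continuous_pi fun z => ?_
  have h : Continuous (fun q : Bool × Bool => q.1 ⊓ q.2) := continuous_of_discreteTopology
  have h2 : Continuous (fun p : (Z → Bool) × (Z → Bool) => (p.1 z, p.2 z)) :=
    Continuous.prodMk ((continuous_apply z).comp continuous_fst)
      ((continuous_apply z).comp continuous_snd)
  exact h.comp h2

lemma aux_upper_eq (U : Set (Z → Bool)) :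
    (↑(upperClosure U) : Set (Z → Bool)) =
      (fun p : (Z → Bool) × (Z → Bool) => p.1 ⊔ p.2) '' (U ×ˢ Set.univ) := by
  ext x
  constructor
  · rintro ⟨y, hy, hle⟩
    exact ⟨(y, x), ⟨hy, trivial⟩, sup_eq_right.mpr hle⟩
  · rintro ⟨⟨y, w⟩, ⟨hy, -⟩, rfl⟩
    exact ⟨y, hy, le_sup_left⟩

lemma aux_lower_eq (U : Set (Z → Bool)) :
    (↑(lowerClosure U) : Set (Z → Bool)) =
      (fun p : (Z → Bool) × (Z → Bool) => p.1 ⊓ p.2) '' (U ×ˢ Set.univ) := by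
  ext x
  constructor
  · rintro ⟨y, hy, hle⟩
    exact ⟨(y, x), ⟨hy, trivial⟩, inf_eq_right.mpr hle⟩
  · rintro ⟨⟨y, w⟩, ⟨hy, -⟩, rfl⟩
    exact ⟨y, hy, inf_le_left⟩

lemma aux_upper_open (U : Set (Z → Bool)) (hU : IsOpen U) :
    IsOpen (↑(upperClosure U) : Set (Z → Bool)) := by
  classical
  rw [isOpen_pi_iff]
  rintro x ⟨y, hy, hle⟩
  rw [isOpen_pi_iff] at hU
  obtain ⟨I, u, hu, hsub⟩ := hU y hy
  refine ⟨I, fun i => {x i}, fun i hi => ⟨isOpen_discrete _, rfl⟩, ?_⟩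
  intro f hf
  refine ⟨fun z => if z ∈ I then y z else false, hsub ?_, ?_⟩
  · intro i hi
    dsimp only; rw [if_pos (Finset.mem_coe.mp hi)]
    exact (hu i hi).2
  · intro z
    by_cases hz : z ∈ I
    · simp only [if_pos hz]
      have := hf z hz
      simp only [Set.mem_singleton_iff] at this
      rw [this]
      exact hle z
    · simp [if_neg hz]

lemma aux_lower_open (U : Set (Z → Bool)) (hU : IsOpen U) :
    IsOpen (↑(lowerClosure U) : Set (Z → Bool)) := by
  classical
  rw [isOpen_pi_iff]
  rintro x ⟨y, hy, hle⟩
  rw [isOpen_pi_iff] at hU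
  obtain ⟨I, u, hu, hsub⟩ := hU y hy
  refine ⟨I, fun i => {x i}, fun i hi => ⟨isOpen_discrete _, rfl⟩, ?_⟩
  intro f hf
  refine ⟨fun z => if z ∈ I then y z else true, hsub ?_, ?_⟩
  · intro i hi
    dsimp only; rw [if_pos (Finset.mem_coe.mp hi)]
    exact (hu i hi).2
  · intro z
    by_cases hz : z ∈ I
    · simp only [if_pos hz]
      have := hf z hz
      simp only [Set.mem_singleton_iff] at this
      rw [this]
      exact hle z
    · simp [if_neg hz]

end Aux

/-- For any set `Z`, the space `Z → Bool` (product topology, `Bool` discrete, pointwise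
order) is a bi-Esakia space: it is compact, satisfies the Priestley separation axiom, and
the lower closure and the upper closure of every clopen set are clopen. -/
theorem stmt_10 (Z : Type*) :
    CompactSpace (Z → Bool) ∧
    (∀ x y : Z → Bool, ¬ x ≤ y →
      ∃ U : Set (Z → Bool), IsClopen U ∧ IsUpperSet U ∧ x ∈ U ∧ y ∉ U) ∧
    (∀ U : Set (Z → Bool), IsClopen U →
      IsClopen (↑(lowerClosure U) : Set (Z → Bool)) ∧
      IsClopen (↑(upperClosure U) : Set (Z → Bool))) := by
  refine ⟨inferInstance, ?_, ?_⟩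
  · intro x y hxy
    rw [Pi.le_def, not_forall] at hxy
    obtain ⟨z, hz⟩ := hxy
    have hx : x z = true := by
      cases hxz : x z
      · exact absurd (hxz ▸ Bool.false_le _) hz
      · rfl
    have hy : y z = false := by
      cases hyz : y z
      · rfl
      · exact absurd (hx ▸ hyz ▸ le_refl true) hz
    refine ⟨(fun f => f z) ⁻¹' {true}, ⟨?_, ?_⟩, ?_, ?_, ?_⟩
    · exact (isClosed_discrete _).preimage (continuous_apply z)
    · exact (isOpen_discrete _).preimage (continuous_apply z)
    · intro a b hab ha
      simp only [Set.mem_preimage, Set.mem_singleton_iff] at ha ⊢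
      have := hab z
      rw [ha] at this
      exact le_antisymm (Bool.le_true _) this
    · simpa using hx
    · simp [hy]
  · intro U hU
    have hUc : IsCompact U := hU.isClosed.isCompact
    have hprod : IsCompact (U ×ˢ (Set.univ : Set (Z → Bool))) :=
      hUc.prod isCompact_univ
    constructor
    · constructor
      · rw [aux_lower_eq]
        exact (hprod.image aux_inf_cont).isClosed
      · exact aux_lower_open U hU.isOpen
    · constructor
      · rw [aux_upper_eq]
        exact (hprod.image aux_sup_cont).isClosed
      · exact aux_upper_open U hU.isOpen
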